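/- Let G be a bipartite d-regular graph with bipartition (O, E). For the antiferromagnetic Ising model, the partition function Ẑ of the polymer-model approximation satisfies Ẑ = (1+λ)^{n/2}·(Ξ_O + Ξ_E), where for D ∈ {O, E}, Ξ_D = ∑_{Θ̂} ∏_{(A,B)∈Θ̂} ω(A,B) is the decorated polymer partition function with weights ω(A,B) = λ^{|A|+|B|}·e^{-β|E(A,B)|}/(1+λ)^{|N(A)|}. -/

import Mathlib

open Finset Real
open scoped Classical

noncomputable section

variable {V : Type*} [Fintype V] [DecidableEq V]

/-- The square of a graph: vertices adjacent iff distinct and at distance at most 2. -/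
def squareGraph (G : SimpleGraph V) : SimpleGraph V where
  Adj x y := x ≠ y ∧ (G.Adj x y ∨ ∃ z, G.Adj x z ∧ G.Adj z y)
  symm := by
    constructor
    rintro x y ⟨hxy, h | ⟨z, h1, h2⟩⟩
    · exact ⟨hxy.symm, Or.inl h.symm⟩
    · exact ⟨hxy.symm, Or.inr ⟨z, h2.symm, h1.symm⟩⟩
  loopless := by constructor; rintro x ⟨h, -⟩; exact h rfl

/-- A vertex subset is 2-linked if it induces a connected subgraph of `G²`. -/
def TwoLinked (G : SimpleGraph V) (A : Finset V) : Prop :=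
  (SimpleGraph.induce (↑A : Set V) (squareGraph G)).Connected

/-- The (external) neighborhood of a vertex set `A`. -/
def nbr (G : SimpleGraph V) (A : Finset V) : Finset V :=
  Finset.univ.filter fun v => v ∉ A ∧ ∃ a ∈ A, G.Adj a v

/-- The bipartite closure of `A ⊆ D`. -/
def bipClosure (G : SimpleGraph V) (D A : Finset V) : Finset V :=
  D.filter fun v => nbr G {v} ⊆ nbr G A

/-- The number of edges between `A` and `B` (for disjoint `A`, `B`). -/
def eBetween (G : SimpleGraph V) (A B : Finset V) : ℕ :=
  ((A ×ˢ B).filter fun p => G.Adj p.1 p.2).card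

/-- The number of edges of `G` induced by `S`. -/
def inducedEdgeCount (G : SimpleGraph V) [DecidableRel G.Adj] (S : Finset V) : ℕ :=
  (G.edgeFinset.filter fun e => ∀ x ∈ e, x ∈ S).card

/-- The weight of a decorated polymer `(A, B)`:
`ω(A,B) = λ^{|A|+|B|}·e^{-β|E(A,B)|}/(1+λ)^{|N(A)|}`. -/
def polyWeight (G : SimpleGraph V) (lam beta : ℝ) (p : Finset V × Finset V) : ℝ :=
  lam ^ (p.1.card + p.2.card) * Real.exp (-beta * (eBetween G p.1 p.2 : ℝ)) /
    (1 + lam) ^ (nbr G p.1).card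

/-- A decorated polymer with defect side `D`: a 2-linked set `A ⊆ D` with
`|[A]| ≤ (3/4)|D|` together with a decoration `B ⊆ N(A)`. -/
def IsPolymer (G : SimpleGraph V) (D : Finset V) (p : Finset V × Finset V) : Prop :=
  p.1 ⊆ D ∧ TwoLinked G p.1 ∧ ((bipClosure G D p.1).card : ℝ) ≤ (3 / 4) * (D.card : ℝ) ∧
    p.2 ⊆ nbr G p.1

/-- Two decorated polymers are compatible if the union of their supports is not 2-linked. -/
def PolyCompat (G : SimpleGraph V) (p q : Finset V × Finset V) : Prop :=
  ¬ TwoLinked G (p.1 ∪ q.1)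

/-- A decorated polymer configuration: a set of pairwise compatible decorated polymers. -/
def IsConfig (G : SimpleGraph V) (D : Finset V) (Θ : Finset (Finset V × Finset V)) : Prop :=
  (∀ p ∈ Θ, IsPolymer G D p) ∧ ∀ p ∈ Θ, ∀ q ∈ Θ, p ≠ q → PolyCompat G p q

/-- The decorated polymer partition function `Ξ_D`. -/
def Xi (G : SimpleGraph V) (lam beta : ℝ) (D : Finset V) : ℝ :=
  ∑ Θ ∈ Finset.univ.filter (IsConfig G D), ∏ p ∈ Θ, polyWeight G lam beta p

/-- `A` is a maximal 2-linked subset of `S`. -/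
def MaxComp (G : SimpleGraph V) (S A : Finset V) : Prop :=
  A ⊆ S ∧ TwoLinked G A ∧ ∀ A', A ⊆ A' → A' ⊆ S → TwoLinked G A' → A' = A

/-- The decorated polymer configuration recovered from `S` with defect side `D`:
the maximal 2-linked components `A` of `S ∩ D`, each decorated by `S ∩ N(A)`. -/
def hatTheta (G : SimpleGraph V) (S D : Finset V) : Finset (Finset V × Finset V) :=
  ((S ∩ D).powerset.filter (MaxComp G (S ∩ D))).image fun A => (A, S ∩ nbr G A)

/-- `ω̂*(S, D) = 1[Θ̂(S) is a valid configuration]·λ^{|S|}e^{-β|E(S)|}`. -/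
def hatWstar (G : SimpleGraph V) [DecidableRel G.Adj] (lam beta : ℝ) (S D : Finset V) : ℝ :=
  if IsConfig G D (hatTheta G S D) then
    lam ^ S.card * Real.exp (-beta * (inducedEdgeCount G S : ℝ))
  else 0

section Aux

variable {V : Type*} [Fintype V] [DecidableEq V]
set_option linter.unusedSectionVars false

/-- Reachability inside a finite vertex set `W` via a graph `G'`. -/
inductive ReachIn (G' : SimpleGraph V) (W : Finset V) : V → V → Prop
  | refl {x : V} (hx : x ∈ W) : ReachIn G' W x x
  | cons {x y z : V} (hx : x ∈ W) (h : G'.Adj x y) (hr : ReachIn G' W y z) :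
      ReachIn G' W x z

namespace ReachIn

variable {G' : SimpleGraph V} {W W' : Finset V} {x y z : V}

lemma mem_left (h : ReachIn G' W x y) : x ∈ W := by cases h <;> assumption

lemma mem_right (h : ReachIn G' W x y) : y ∈ W := by
  induction h with
  | refl hx => exact hx
  | cons hx h hr ih => exact ih

lemma trans (h1 : ReachIn G' W x y) (h2 : ReachIn G' W y z) : ReachIn G' W x z := by
  induction h1 with
  | refl hx => exact h2
  | cons hx h hr ih => exact .cons hx h (ih h2)

lemma symm (h : ReachIn G' W x y) : ReachIn G' W y x := by
  induction h with
  | refl hx => exact .refl hx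
  | cons hx h hr ih => exact ih.trans (.cons hr.mem_left h.symm (.refl hx))

lemma mono (hW : W ⊆ W') (h : ReachIn G' W x y) : ReachIn G' W' x y := by
  induction h with
  | refl hx => exact .refl (hW hx)
  | cons hx h hr ih => exact .cons (hW hx) h ih

end ReachIn

lemma reachIn_of_walk {G' : SimpleGraph V} {A : Finset V}
    {a b : (↑A : Set V)} (w : (SimpleGraph.induce (↑A : Set V) G').Walk a b) :
    ReachIn G' A (a : V) (b : V) := by
  induction w with
  | @nil c => exact .refl (by exact_mod_cast c.2)
  | @cons u' v' w' h p ih => exact .cons (by exact_mod_cast u'.2) h ih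

lemma ReachIn.reachable {G' : SimpleGraph V} {A : Finset V} {x y : V}
    (h : ReachIn G' A x y) :
    ∀ (hx : x ∈ A) (hy : y ∈ A),
      (SimpleGraph.induce (↑A : Set V) G').Reachable ⟨x, by exact_mod_cast hx⟩
        ⟨y, by exact_mod_cast hy⟩ := by
  induction h with
  | refl hx => intro _ _; rfl
  | @cons x y z hx h hr ih =>
      intro _ hz
      have hy : y ∈ A := hr.mem_left
      exact (SimpleGraph.Adj.reachable (by exact h : (SimpleGraph.induce
        (↑A : Set V) G').Adj ⟨x, by exact_mod_cast hx⟩ ⟨y, by exact_mod_cast hy⟩)).trans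
        (ih hy hz)

lemma TwoLinked.nonempty {G : SimpleGraph V} {A : Finset V} (h : TwoLinked G A) :
    A.Nonempty := by
  obtain ⟨⟨x, hx⟩⟩ := SimpleGraph.Connected.nonempty h
  exact ⟨x, by exact_mod_cast hx⟩

lemma twoLinked_iff {G : SimpleGraph V} {A : Finset V} (hA : A.Nonempty) :
    TwoLinked G A ↔ ∀ x ∈ A, ∀ y ∈ A, ReachIn (squareGraph G) A x y := by
  constructor
  · intro h x hx y hy
    obtain ⟨w⟩ := h.preconnected ⟨x, by exact_mod_cast hx⟩ ⟨y, by exact_mod_cast hy⟩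
    exact reachIn_of_walk w
  · intro h
    rw [TwoLinked, SimpleGraph.connected_iff]
    obtain ⟨x0, hx0⟩ := hA
    refine ⟨fun a b => ?_, ⟨⟨x0, by exact_mod_cast hx0⟩⟩⟩
    have := (h a (by exact_mod_cast a.2) b (by exact_mod_cast b.2)).reachable
      (by exact_mod_cast a.2) (by exact_mod_cast b.2)
    convert this <;> simp

end Aux

section Aux2
set_option linter.unusedSectionVars false
variable {V : Type*} [Fintype V] [DecidableEq V] {G : SimpleGraph V}

lemma twoLinked_union_of_mem {A B : Finset V} {x : V}
    (hA : TwoLinked G A) (hB : TwoLinked G B) (hxA : x ∈ A) (hxB : x ∈ B) :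
    TwoLinked G (A ∪ B) := by
  rw [twoLinked_iff ⟨x, Finset.mem_union_left _ hxA⟩]
  have hAs : A ⊆ A ∪ B := Finset.subset_union_left
  have hBs : B ⊆ A ∪ B := Finset.subset_union_right
  rw [twoLinked_iff hA.nonempty] at hA
  rw [twoLinked_iff hB.nonempty] at hB
  intro a ha b hb
  rcases Finset.mem_union.1 ha with h | h <;> rcases Finset.mem_union.1 hb with h' | h'
  · exact (hA a h b h').mono hAs
  · exact ((hA a h x hxA).mono hAs).trans ((hB x hxB b h').mono hBs)
  · exact ((hB a h x hxB).mono hBs).trans ((hA x hxA b h').mono hAs)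
  · exact (hB a h b h').mono hBs

lemma twoLinked_union_of_adj {A B : Finset V} {a b : V}
    (hA : TwoLinked G A) (hB : TwoLinked G B) (haA : a ∈ A) (hbB : b ∈ B)
    (hab : (squareGraph G).Adj a b) : TwoLinked G (A ∪ B) := by
  rw [twoLinked_iff ⟨a, Finset.mem_union_left _ haA⟩]
  have hAs : A ⊆ A ∪ B := Finset.subset_union_left
  have hBs : B ⊆ A ∪ B := Finset.subset_union_right
  rw [twoLinked_iff hA.nonempty] at hA
  rw [twoLinked_iff hB.nonempty] at hB
  have key : ReachIn (squareGraph G) (A ∪ B) a b :=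
    .cons (hAs haA) hab (.refl (hBs hbB))
  intro x hx y hy
  rcases Finset.mem_union.1 hx with h | h <;> rcases Finset.mem_union.1 hy with h' | h'
  · exact (hA x h y h').mono hAs
  · exact (((hA x h a haA).mono hAs).trans key).trans ((hB b hbB y h').mono hBs)
  · exact (((hB x h b hbB).mono hBs).trans key.symm).trans ((hA a haA y h').mono hAs)
  · exact (hB x h y h').mono hBs

/-- The 2-linked component of `x` inside `W`. -/
def comp (G : SimpleGraph V) (W : Finset V) (x : V) : Finset V :=
  W.filter fun y => ReachIn (squareGraph G) W x y

lemma comp_subset {W : Finset V} {x : V} : comp G W x ⊆ W := Finset.filter_subset _ _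

lemma mem_comp {W : Finset V} {x y : V} :
    y ∈ comp G W x ↔ ReachIn (squareGraph G) W x y := by
  simp only [comp, Finset.mem_filter, and_iff_right_iff_imp]
  exact fun h => h.mem_right

lemma mem_comp_self {W : Finset V} {x : V} (hx : x ∈ W) : x ∈ comp G W x :=
  mem_comp.2 (.refl hx)

lemma reachIn_comp {W : Finset V} {x a b : V}
    (h : ReachIn (squareGraph G) W a b) (hxa : ReachIn (squareGraph G) W x a) :
    ReachIn (squareGraph G) (comp G W x) a b := by
  induction h with
  | refl hx' => exact .refl (mem_comp.2 hxa)
  | @cons a y b ha h hr ih =>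
      exact .cons (mem_comp.2 hxa) h
        (ih (hxa.trans (.cons ha h (.refl hr.mem_left))))

lemma twoLinked_comp {W : Finset V} {x : V} (hx : x ∈ W) : TwoLinked G (comp G W x) := by
  rw [twoLinked_iff ⟨x, mem_comp_self hx⟩]
  intro a ha b hb
  exact (reachIn_comp (mem_comp.1 ha) (.refl hx)).symm.trans
    (reachIn_comp (mem_comp.1 hb) (.refl hx))

lemma maxComp_comp {W : Finset V} {x : V} (hx : x ∈ W) : MaxComp G W (comp G W x) := by
  refine ⟨comp_subset, twoLinked_comp hx, fun A' hsub hsub' hA' => ?_⟩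
  refine Finset.Subset.antisymm (fun y hy => ?_) hsub
  rw [twoLinked_iff hA'.nonempty] at hA'
  exact mem_comp.2 ((hA' x (hsub (mem_comp_self hx)) y hy).mono hsub')

lemma MaxComp.eq_comp {W A : Finset V} {x : V} (hA : MaxComp G W A) (hx : x ∈ A) :
    A = comp G W x := by
  obtain ⟨hsub, htl, hmax⟩ := hA
  have hxW : x ∈ W := hsub hx
  have h1 : A ∪ comp G W x = A :=
    hmax _ Finset.subset_union_left (Finset.union_subset hsub comp_subset)
      (twoLinked_union_of_mem htl (twoLinked_comp hxW) hx (mem_comp_self hxW))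
  have h2 : A ∪ comp G W x = comp G W x := by
    obtain ⟨h1', h2', h3'⟩ := maxComp_comp (G := G) hxW
    exact h3' _ Finset.subset_union_right (Finset.union_subset hsub comp_subset)
      (twoLinked_union_of_mem htl (twoLinked_comp hxW) hx (mem_comp_self hxW))
  rw [← h1, h2]

lemma MaxComp.eq_or_disjoint {W A B : Finset V} (hA : MaxComp G W A) (hB : MaxComp G W B) :
    A = B ∨ Disjoint A B := by
  by_cases h : Disjoint A B
  · exact Or.inr h
  · left
    obtain ⟨x, hxA, hxB⟩ := Finset.not_disjoint_iff.1 h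
    rw [hA.eq_comp hxA, hB.eq_comp hxB]

lemma MaxComp.eq_of_adj {W A B : Finset V} (hA : MaxComp G W A) (hB : MaxComp G W B)
    {a b : V} (haA : a ∈ A) (hbB : b ∈ B) (hab : (squareGraph G).Adj a b ∨ a = b) :
    A = B := by
  rcases hab with hab | rfl
  · have htl : TwoLinked G (A ∪ B) :=
      twoLinked_union_of_adj hA.2.1 hB.2.1 haA hbB hab
    have hsub : A ∪ B ⊆ W := Finset.union_subset hA.1 hB.1
    have h1 := hA.2.2 _ Finset.subset_union_left hsub htl
    have h2 := hB.2.2 _ Finset.subset_union_right hsub htl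
    rw [← h1, h2]
  · rcases hA.eq_or_disjoint hB with h | h
    · exact h
    · exact absurd (h.forall_ne_finset haA hbB) (by simp)

end Aux2

section Aux3
set_option linter.unusedSectionVars false
variable {V : Type*} [Fintype V] [DecidableEq V] {G : SimpleGraph V}

lemma mem_nbr {A : Finset V} {v : V} :
    v ∈ nbr G A ↔ v ∉ A ∧ ∃ a ∈ A, G.Adj a v := by
  simp [nbr]

lemma nbr_disjoint_of_maxComp {W A B : Finset V} (hA : MaxComp G W A)
    (hB : MaxComp G W B) (hne : A ≠ B) : Disjoint (nbr G A) (nbr G B) := by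
  rw [Finset.disjoint_left]
  intro v hvA hvB
  obtain ⟨hvnA, a, haA, hav⟩ := mem_nbr.1 hvA
  obtain ⟨hvnB, b, hbB, hbv⟩ := mem_nbr.1 hvB
  refine hne (hA.eq_of_adj hB haA hbB ?_)
  by_cases hab : a = b
  · exact Or.inr hab
  · exact Or.inl ⟨hab, Or.inr ⟨v, hav, hbv.symm⟩⟩

lemma mem_hatTheta {S D : Finset V} {p : Finset V × Finset V} :
    p ∈ hatTheta G S D ↔ MaxComp G (S ∩ D) p.1 ∧ p.2 = S ∩ nbr G p.1 := by
  simp only [hatTheta, Finset.mem_image, Finset.mem_filter, Finset.mem_powerset]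
  constructor
  · rintro ⟨A, ⟨hsub, hmax⟩, rfl⟩
    exact ⟨hmax, rfl⟩
  · rintro ⟨hmax, hp2⟩
    exact ⟨p.1, ⟨hmax.1, hmax⟩, by rw [← hp2]⟩

lemma hatTheta_fst_inj {S D : Finset V} {p q : Finset V × Finset V}
    (hp : p ∈ hatTheta G S D) (hq : q ∈ hatTheta G S D) (h : p.1 = q.1) : p = q := by
  obtain ⟨_, hp2⟩ := mem_hatTheta.1 hp
  obtain ⟨_, hq2⟩ := mem_hatTheta.1 hq
  exact Prod.ext h (by rw [hp2, hq2, h])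

lemma hatTheta_biUnion_fst {S D : Finset V} :
    (hatTheta G S D).biUnion (fun p => p.1) = S ∩ D := by
  apply Finset.Subset.antisymm
  · intro x hx
    obtain ⟨p, hp, hxp⟩ := Finset.mem_biUnion.1 hx
    exact (mem_hatTheta.1 hp).1.1 hxp
  · intro x hx
    refine Finset.mem_biUnion.2 ⟨(comp G (S ∩ D) x, S ∩ nbr G (comp G (S ∩ D) x)), ?_, ?_⟩
    · exact mem_hatTheta.2 ⟨maxComp_comp hx, rfl⟩
    · exact mem_comp_self hx

/-- In a configuration, the `fst` components are distinct. -/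
lemma IsConfig.fst_inj {D : Finset V} {Θ : Finset (Finset V × Finset V)}
    (hΘ : IsConfig G D Θ) {p q : Finset V × Finset V}
    (hp : p ∈ Θ) (hq : q ∈ Θ) (h : p.1 = q.1) : p = q := by
  by_contra hne
  have hcomp := hΘ.2 p hp q hq hne
  have htl : TwoLinked G p.1 := (hΘ.1 p hp).2.1
  rw [PolyCompat, h, Finset.union_self] at hcomp
  exact hcomp ((h ▸ htl))

/-- Reachability within the union of the supports of a configuration stays in one support. -/
lemma IsConfig.reach_stays {D : Finset V} {Θ : Finset (Finset V × Finset V)}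
    (hΘ : IsConfig G D Θ) {a b : V}
    (h : ReachIn (squareGraph G) (Θ.biUnion fun q => q.1) a b)
    {p : Finset V × Finset V} (hp : p ∈ Θ) (ha : a ∈ p.1) : b ∈ p.1 := by
  induction h with
  | refl hx => exact ha
  | @cons x y z hx hadj hr ih =>
      apply ih
      obtain ⟨q, hq, hyq⟩ := Finset.mem_biUnion.1 hr.mem_left
      by_cases hpq : p = q
      · exact hpq ▸ hyq
      · exfalso
        exact hΘ.2 p hp q hq hpq
          (twoLinked_union_of_adj (hΘ.1 p hp).2.1 (hΘ.1 q hq).2.1 ha hyq hadj)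

lemma IsConfig.maxComp {D : Finset V} {Θ : Finset (Finset V × Finset V)}
    (hΘ : IsConfig G D Θ) {p : Finset V × Finset V} (hp : p ∈ Θ) :
    MaxComp G (Θ.biUnion fun q => q.1) p.1 := by
  refine ⟨fun x hx => Finset.mem_biUnion.2 ⟨p, hp, hx⟩, (hΘ.1 p hp).2.1,
    fun A' hsub hsub' hA' => ?_⟩
  refine Finset.Subset.antisymm (fun y hy => ?_) hsub
  obtain ⟨x, hx⟩ := ((hΘ.1 p hp).2.1).nonempty
  rw [twoLinked_iff hA'.nonempty] at hA'
  exact hΘ.reach_stays ((hA' x (hsub hx) y hy).mono hsub') hp hx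

lemma IsConfig.maxComp_mem {D : Finset V} {Θ : Finset (Finset V × Finset V)}
    (hΘ : IsConfig G D Θ) {A : Finset V}
    (hA : MaxComp G (Θ.biUnion fun q => q.1) A) : ∃ p ∈ Θ, p.1 = A := by
  obtain ⟨x, hx⟩ := hA.2.1.nonempty
  obtain ⟨p, hp, hxp⟩ := Finset.mem_biUnion.1 (hA.1 hx)
  refine ⟨p, hp, ?_⟩
  rw [(hΘ.maxComp hp).eq_comp hxp, hA.eq_comp hx]

/-- Distinct supports in a configuration are disjoint. -/
lemma IsConfig.fst_disjoint {D : Finset V} {Θ : Finset (Finset V × Finset V)}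
    (hΘ : IsConfig G D Θ) {p q : Finset V × Finset V}
    (hp : p ∈ Θ) (hq : q ∈ Θ) (hne : p ≠ q) : Disjoint p.1 q.1 := by
  rcases (hΘ.maxComp hp).eq_or_disjoint (hΘ.maxComp hq) with h | h
  · exact absurd (hΘ.fst_inj hp hq h) hne
  · exact h

lemma IsConfig.nbr_disjoint {D : Finset V} {Θ : Finset (Finset V × Finset V)}
    (hΘ : IsConfig G D Θ) {p q : Finset V × Finset V}
    (hp : p ∈ Θ) (hq : q ∈ Θ) (hne : p ≠ q) : Disjoint (nbr G p.1) (nbr G q.1) :=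
  nbr_disjoint_of_maxComp (hΘ.maxComp hp) (hΘ.maxComp hq)
    (fun h => hne (hΘ.fst_inj hp hq h))

end Aux3

section Aux4
set_option linter.unusedSectionVars false
variable {V : Type*} [Fintype V] [DecidableEq V] {G : SimpleGraph V}

/-- The union of the neighborhoods of the supports of a configuration. -/
def bigN (G : SimpleGraph V) (Θ : Finset (Finset V × Finset V)) : Finset V :=
  Θ.biUnion fun p => nbr G p.1

/-- Reconstruction of a subset from a configuration and a free part. -/
def recon (Θ : Finset (Finset V × Finset V)) (T : Finset V) : Finset V :=
  (Θ.biUnion fun p => p.1 ∪ p.2) ∪ T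

variable {D D' : Finset V}
  (hd : Disjoint D D') (hu : D ∪ D' = Finset.univ)
  (hb : ∀ u v, G.Adj u v → (u ∈ D ∧ v ∈ D') ∨ (u ∈ D' ∧ v ∈ D))

include hd hb

lemma nbr_subset_other {A : Finset V} (hA : A ⊆ D) : nbr G A ⊆ D' := by
  intro v hv
  obtain ⟨-, a, haA, hav⟩ := mem_nbr.1 hv
  rcases hb a v hav with ⟨-, h⟩ | ⟨h, -⟩
  · exact h
  · exact absurd (hA haA) (Finset.disjoint_right.1 hd h)

variable {Θ : Finset (Finset V × Finset V)} {T : Finset V}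

lemma snd_subset_other (hΘ : IsConfig G D Θ) {p : Finset V × Finset V} (hp : p ∈ Θ) :
    p.2 ⊆ D' :=
  Finset.Subset.trans (hΘ.1 p hp).2.2.2 (nbr_subset_other hd hb (hΘ.1 p hp).1)

lemma recon_inter_left (hΘ : IsConfig G D Θ) (hT : T ⊆ D' \ bigN G Θ) :
    recon Θ T ∩ D = Θ.biUnion fun p => p.1 := by
  ext x
  simp only [recon, Finset.mem_inter, Finset.mem_union, Finset.mem_biUnion]
  constructor
  · rintro ⟨⟨p, hp, h | h⟩ | hxT, hxD⟩
    · exact ⟨p, hp, h⟩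
    · exact absurd hxD (Finset.disjoint_right.1 hd (snd_subset_other hd hb hΘ hp h))
    · exact absurd hxD (Finset.disjoint_right.1 hd (Finset.mem_sdiff.1 (hT hxT)).1)
  · rintro ⟨p, hp, hx⟩
    exact ⟨Or.inl ⟨p, hp, Or.inl hx⟩, (hΘ.1 p hp).1 hx⟩

lemma recon_inter_nbr (hΘ : IsConfig G D Θ) (hT : T ⊆ D' \ bigN G Θ)
    {p : Finset V × Finset V} (hp : p ∈ Θ) :
    recon Θ T ∩ nbr G p.1 = p.2 := by
  apply Finset.Subset.antisymm
  · intro v hv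
    obtain ⟨hvS, hvn⟩ := Finset.mem_inter.1 hv
    rcases Finset.mem_union.1 hvS with h | h
    · obtain ⟨q, hq, hvq⟩ := Finset.mem_biUnion.1 h
      rcases Finset.mem_union.1 hvq with h' | h'
      · exact absurd ((hΘ.1 q hq).1 h') (Finset.disjoint_right.1 hd
          (nbr_subset_other hd hb (hΘ.1 p hp).1 hvn))
      · by_cases hpq : p = q
        · exact hpq ▸ h'
        · exact absurd hvn (Finset.disjoint_right.1
            (hΘ.nbr_disjoint hp hq hpq) ((hΘ.1 q hq).2.2.2 h'))
    · exact absurd (Finset.mem_biUnion.2 ⟨p, hp, hvn⟩)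
        ((Finset.mem_sdiff.1 (hT h)).2)
  · intro v hv
    exact Finset.mem_inter.2 ⟨Finset.mem_union_left _
      (Finset.mem_biUnion.2 ⟨p, hp, Finset.mem_union_right _ hv⟩), (hΘ.1 p hp).2.2.2 hv⟩

lemma hatTheta_recon (hΘ : IsConfig G D Θ) (hT : T ⊆ D' \ bigN G Θ) :
    hatTheta G (recon Θ T) D = Θ := by
  ext q
  rw [mem_hatTheta, recon_inter_left hd hb hΘ hT]
  constructor
  · rintro ⟨hmax, hq2⟩
    obtain ⟨p, hp, hp1⟩ := hΘ.maxComp_mem hmax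
    have : q = p := Prod.ext hp1.symm (by
      rw [hq2, ← hp1, recon_inter_nbr hd hb hΘ hT hp])
    exact this ▸ hp
  · intro hq
    exact ⟨hΘ.maxComp hq, (recon_inter_nbr hd hb hΘ hT hq).symm⟩

lemma recon_card (hΘ : IsConfig G D Θ) (hT : T ⊆ D' \ bigN G Θ) :
    (recon Θ T).card = (∑ p ∈ Θ, (p.1.card + p.2.card)) + T.card := by
  have hdisjpq : ∀ p ∈ Θ, ∀ q ∈ Θ, p ≠ q → Disjoint (p.1 ∪ p.2) (q.1 ∪ q.2) := by
    intro p hp q hq hpq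
    simp only [Finset.disjoint_union_left, Finset.disjoint_union_right]
    refine ⟨⟨hΘ.fst_disjoint hp hq hpq, ?_⟩, ⟨?_, ?_⟩⟩
    · exact Finset.disjoint_of_subset_left (snd_subset_other hd hb hΘ hp)
        (Finset.disjoint_of_subset_right (hΘ.1 q hq).1 hd.symm)
    · exact Finset.disjoint_of_subset_left (hΘ.1 p hp).1
        (Finset.disjoint_of_subset_right (snd_subset_other hd hb hΘ hq) hd)
    · exact Finset.disjoint_of_subset_left (hΘ.1 p hp).2.2.2
        (Finset.disjoint_of_subset_right (hΘ.1 q hq).2.2.2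
          (hΘ.nbr_disjoint hp hq hpq))
  have hTd : Disjoint (Θ.biUnion fun p => p.1 ∪ p.2) T := by
    rw [Finset.disjoint_left]
    intro x hx hxT
    obtain ⟨p, hp, hxp⟩ := Finset.mem_biUnion.1 hx
    obtain ⟨hxD', hxN⟩ := Finset.mem_sdiff.1 (hT hxT)
    rcases Finset.mem_union.1 hxp with h | h
    · exact Finset.disjoint_left.1 hd ((hΘ.1 p hp).1 h) hxD'
    · exact hxN (Finset.mem_biUnion.2 ⟨p, hp, (hΘ.1 p hp).2.2.2 h⟩)
  rw [recon, Finset.card_union_of_disjoint hTd, Finset.card_biUnion hdisjpq]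
  congr 1
  apply Finset.sum_congr rfl
  intro p hp
  exact Finset.card_union_of_disjoint (Finset.disjoint_of_subset_left (hΘ.1 p hp).1
    (Finset.disjoint_of_subset_right (snd_subset_other hd hb hΘ hp) hd))

end Aux4

section Aux5
set_option linter.unusedSectionVars false
variable {V : Type*} [Fintype V] [DecidableEq V] {G : SimpleGraph V} [DecidableRel G.Adj]

variable {D D' : Finset V}
  (hd : Disjoint D D')
  (hb : ∀ u v, G.Adj u v → (u ∈ D ∧ v ∈ D') ∨ (u ∈ D' ∧ v ∈ D))

include hd hb

lemma bip_pairs (S : Finset V) :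
    inducedEdgeCount G S
      = (((S ∩ D) ×ˢ (S ∩ D')).filter fun pr => G.Adj pr.1 pr.2).card := by
  rw [inducedEdgeCount]
  symm
  apply Finset.card_bij (fun pr _ => s(pr.1, pr.2))
  · rintro ⟨a, v⟩ h
    simp only [Finset.mem_filter, Finset.mem_product, Finset.mem_inter] at h
    obtain ⟨⟨⟨haS, haD⟩, hvS, hvD'⟩, hadj⟩ := h
    simp only [Finset.mem_filter, SimpleGraph.mem_edgeFinset, SimpleGraph.mem_edgeSet]
    refine ⟨hadj, fun x hx => ?_⟩
    rcases Sym2.mem_iff.1 hx with rfl | rfl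
    exacts [haS, hvS]
  · rintro ⟨a, v⟩ ha ⟨a', v'⟩ ha' h
    simp only [Finset.mem_filter, Finset.mem_product, Finset.mem_inter] at ha ha'
    rcases Sym2.eq_iff.1 h with ⟨rfl, rfl⟩ | ⟨h1, h2⟩
    · rfl
    · exfalso
      have h1' : a = v' := h1
      exact Finset.disjoint_left.1 hd ha.1.1.2 (h1' ▸ ha'.1.2.2)
  · intro e he
    simp only [Finset.mem_filter, SimpleGraph.mem_edgeFinset, SimpleGraph.mem_edgeSet] at he
    induction e with
    | _ x y =>
      obtain ⟨hadj, hmem⟩ := he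
      rw [SimpleGraph.mem_edgeSet] at hadj
      have hx : x ∈ S := hmem x (Sym2.mem_mk_left x y)
      have hy : y ∈ S := hmem y (Sym2.mem_mk_right x y)
      rcases hb x y hadj with ⟨h1, h2⟩ | ⟨h1, h2⟩
      · exact ⟨(x, y), by simp [Finset.mem_filter, Finset.mem_product, hx, hy, h1, h2, hadj]⟩
      · exact ⟨(y, x), by
          simp [Finset.mem_filter, Finset.mem_product, hx, hy, h1, h2, hadj.symm], Sym2.eq_swap⟩

variable {Θ : Finset (Finset V × Finset V)} {T : Finset V}

lemma recon_edge (hΘ : IsConfig G D Θ) (hT : T ⊆ D' \ bigN G Θ) :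
    inducedEdgeCount G (recon Θ T) = ∑ p ∈ Θ, eBetween G p.1 p.2 := by
  rw [bip_pairs hd hb]
  have key : ((recon Θ T ∩ D) ×ˢ (recon Θ T ∩ D')).filter (fun pr => G.Adj pr.1 pr.2)
      = Θ.biUnion fun p => (p.1 ×ˢ p.2).filter fun pr => G.Adj pr.1 pr.2 := by
    ext ⟨a, v⟩
    simp only [Finset.mem_filter, Finset.mem_product, Finset.mem_inter, Finset.mem_biUnion]
    constructor
    · rintro ⟨⟨⟨haS, haD⟩, hvS, hvD'⟩, hadj⟩
      have ha' : a ∈ recon Θ T ∩ D := Finset.mem_inter.2 ⟨haS, haD⟩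
      rw [recon_inter_left hd hb hΘ hT] at ha'
      obtain ⟨p, hp, hap⟩ := Finset.mem_biUnion.1 ha'
      refine ⟨p, hp, ⟨hap, ?_⟩, hadj⟩
      have hvn : v ∈ nbr G p.1 := mem_nbr.2
        ⟨fun hvp => Finset.disjoint_left.1 hd ((hΘ.1 p hp).1 hvp) hvD', a, hap, hadj⟩
      rw [← recon_inter_nbr hd hb hΘ hT hp]
      exact Finset.mem_inter.2 ⟨hvS, hvn⟩
    · rintro ⟨p, hp, ⟨hap, hvp⟩, hadj⟩
      have ha' : a ∈ recon Θ T ∩ D := by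
        rw [recon_inter_left hd hb hΘ hT]
        exact Finset.mem_biUnion.2 ⟨p, hp, hap⟩
      have hv' : v ∈ recon Θ T ∩ nbr G p.1 := by
        rw [recon_inter_nbr hd hb hΘ hT hp]; exact hvp
      refine ⟨⟨Finset.mem_inter.1 ha', ?_⟩, hadj⟩
      exact ⟨(Finset.mem_inter.1 hv').1, snd_subset_other hd hb hΘ hp hvp⟩
  rw [key, Finset.card_biUnion]
  · exact Finset.sum_congr rfl fun p _ => by unfold eBetween; congr
  · intro p hp q hq hpq
    rw [Function.onFun, Finset.disjoint_left]
    rintro ⟨a, v⟩ h1 h2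
    simp only [Finset.mem_filter, Finset.mem_product] at h1 h2
    exact Finset.disjoint_left.1 (hΘ.fst_disjoint hp hq hpq) h1.1.1 h2.1.1

end Aux5

section Aux6
set_option linter.unusedSectionVars false
variable {V : Type*} [Fintype V] [DecidableEq V] {G : SimpleGraph V} [DecidableRel G.Adj]

variable {D D' : Finset V}
  (hd : Disjoint D D')
  (hb : ∀ u v, G.Adj u v → (u ∈ D ∧ v ∈ D') ∨ (u ∈ D' ∧ v ∈ D))

lemma S_decomp (S : Finset V) :
    recon (hatTheta G S D) (S \ (D ∪ bigN G (hatTheta G S D))) = S := by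
  ext x
  constructor
  · intro hx
    rcases Finset.mem_union.1 hx with h | h
    · obtain ⟨p, hp, hxp⟩ := Finset.mem_biUnion.1 h
      obtain ⟨hmax, hp2⟩ := mem_hatTheta.1 hp
      rcases Finset.mem_union.1 hxp with h' | h'
      · exact (Finset.mem_inter.1 (hmax.1 h')).1
      · exact (Finset.mem_inter.1 (hp2 ▸ h')).1
    · exact (Finset.mem_sdiff.1 h).1
  · intro hx
    by_cases hxD : x ∈ D
    · have : x ∈ (hatTheta G S D).biUnion fun p => p.1 := by
        rw [hatTheta_biUnion_fst]; exact Finset.mem_inter.2 ⟨hx, hxD⟩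
      obtain ⟨p, hp, hxp⟩ := Finset.mem_biUnion.1 this
      exact Finset.mem_union_left _ (Finset.mem_biUnion.2 ⟨p, hp, Finset.mem_union_left _ hxp⟩)
    · by_cases hxN : x ∈ bigN G (hatTheta G S D)
      · obtain ⟨p, hp, hxp⟩ := Finset.mem_biUnion.1 hxN
        refine Finset.mem_union_left _ (Finset.mem_biUnion.2 ⟨p, hp, Finset.mem_union_right _ ?_⟩)
        rw [(mem_hatTheta.1 hp).2]
        exact Finset.mem_inter.2 ⟨hx, hxp⟩
      · exact Finset.mem_union_right _ (Finset.mem_sdiff.2 ⟨hx, by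
          simp only [Finset.mem_union, not_or]; exact ⟨hxD, hxN⟩⟩)

lemma sdiff_mem_free (hu : D ∪ D' = Finset.univ) (S : Finset V) :
    S \ (D ∪ bigN G (hatTheta G S D)) ⊆ D' \ bigN G (hatTheta G S D) := by
  intro x hx
  obtain ⟨hxS, hxn⟩ := Finset.mem_sdiff.1 hx
  simp only [Finset.mem_union, not_or] at hxn
  refine Finset.mem_sdiff.2 ⟨?_, hxn.2⟩
  have : x ∈ D ∪ D' := hu ▸ Finset.mem_univ x
  rcases Finset.mem_union.1 this with h | h
  · exact absurd h hxn.1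
  · exact h

include hd hb

lemma recon_sdiff {Θ : Finset (Finset V × Finset V)} {T : Finset V}
    (hΘ : IsConfig G D Θ) (hT : T ⊆ D' \ bigN G Θ) :
    recon Θ T \ (D ∪ bigN G Θ) = T := by
  ext x
  constructor
  · intro hx
    obtain ⟨hxr, hxn⟩ := Finset.mem_sdiff.1 hx
    simp only [Finset.mem_union, not_or] at hxn
    rcases Finset.mem_union.1 hxr with h | h
    · obtain ⟨p, hp, hxp⟩ := Finset.mem_biUnion.1 h
      rcases Finset.mem_union.1 hxp with h' | h'
      · exact absurd ((hΘ.1 p hp).1 h') hxn.1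
      · exact absurd (Finset.mem_biUnion.2 ⟨p, hp, (hΘ.1 p hp).2.2.2 h'⟩) hxn.2
    · exact h
  · intro hx
    obtain ⟨hxD', hxN⟩ := Finset.mem_sdiff.1 (hT hx)
    refine Finset.mem_sdiff.2 ⟨Finset.mem_union_right _ hx, ?_⟩
    simp only [Finset.mem_union, not_or]
    exact ⟨Finset.disjoint_right.1 hd hxD', hxN⟩

lemma bigN_subset {Θ : Finset (Finset V × Finset V)} (hΘ : IsConfig G D Θ) :
    bigN G Θ ⊆ D' := by
  intro x hx
  obtain ⟨p, hp, hxp⟩ := Finset.mem_biUnion.1 hx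
  exact nbr_subset_other hd hb (hΘ.1 p hp).1 hxp

omit hd hb

lemma bigN_card {Θ : Finset (Finset V × Finset V)} (hΘ : IsConfig G D Θ) :
    (bigN G Θ).card = ∑ p ∈ Θ, (nbr G p.1).card :=
  Finset.card_biUnion fun p hp q hq hpq => hΘ.nbr_disjoint hp hq hpq

lemma sum_powerset_pow (F : Finset V) (lam : ℝ) :
    ∑ T ∈ F.powerset, lam ^ T.card = (1 + lam) ^ F.card := by
  have := Finset.prod_add (fun _ : V => lam) (fun _ : V => 1) F
  simp only [Finset.prod_const, Finset.prod_const_one, one_pow, mul_one] at this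
  rw [add_comm 1 lam, ← this]

end Aux6

section Main
set_option linter.unusedSectionVars false
variable {V : Type*} [Fintype V] [DecidableEq V]

lemma main_side (G : SimpleGraph V) [DecidableRel G.Adj] {D D' : Finset V}
    (hd : Disjoint D D') (hu : D ∪ D' = Finset.univ)
    (hb : ∀ u v, G.Adj u v → (u ∈ D ∧ v ∈ D') ∨ (u ∈ D' ∧ v ∈ D))
    (lam beta : ℝ) (hlam : 0 < lam) :
    ∑ S : Finset V, hatWstar G lam beta S D = (1 + lam) ^ D'.card * Xi G lam beta D := by
  classical
  have hlam1 : (0:ℝ) < 1 + lam := by linarith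
  set f : Finset V → ℝ :=
    fun S => lam ^ S.card * Real.exp (-beta * (inducedEdgeCount G S : ℝ)) with hf
  set g : (Finset (Finset V × Finset V)) × Finset V → ℝ :=
    fun b => (∏ p ∈ b.1, lam ^ (p.1.card + p.2.card) *
        Real.exp (-beta * (eBetween G p.1 p.2 : ℝ))) * lam ^ b.2.card with hg
  set t : Finset ((Finset (Finset V × Finset V)) × Finset V) :=
    Finset.univ.filter (fun b => IsConfig G D b.1 ∧ b.2 ⊆ D' \ bigN G b.1) with ht
  have memt : ∀ b, b ∈ t ↔ IsConfig G D b.1 ∧ b.2 ⊆ D' \ bigN G b.1 := by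
    intro b; rw [ht, Finset.mem_filter]; simp
  have stepA : ∑ S : Finset V, hatWstar G lam beta S D
      = ∑ S ∈ Finset.univ.filter (fun S => IsConfig G D (hatTheta G S D)), f S := by
    rw [Finset.sum_filter]
    refine Finset.sum_congr rfl fun S _ => ?_
    by_cases h : IsConfig G D (hatTheta G S D) <;> simp [hatWstar, h, hf]
  have himem : ∀ S ∈ Finset.univ.filter (fun S => IsConfig G D (hatTheta G S D)),
      (hatTheta G S D, S \ (D ∪ bigN G (hatTheta G S D))) ∈ t := by
    intro S hS
    exact (memt _).2 ⟨(Finset.mem_filter.1 hS).2, sdiff_mem_free hu S⟩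
  have hfg : ∀ b ∈ t, f (recon b.1 b.2) = g b := by
    intro b hbt
    obtain ⟨h1, h2⟩ := (memt b).1 hbt
    rw [hf, hg]
    simp only
    rw [recon_card hd hb h1 h2, recon_edge hd hb h1 h2, pow_add]
    have hexp : Real.exp (-beta * ((∑ p ∈ b.1, eBetween G p.1 p.2 : ℕ) : ℝ))
        = ∏ p ∈ b.1, Real.exp (-beta * (eBetween G p.1 p.2 : ℝ)) := by
      rw [← Real.exp_sum]
      congr 1
      push_cast
      rw [Finset.mul_sum]
    rw [hexp, ← Finset.prod_pow_eq_pow_sum, Finset.prod_mul_distrib]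
    ring
  have stepB : ∑ S ∈ Finset.univ.filter (fun S => IsConfig G D (hatTheta G S D)), f S
      = ∑ b ∈ t, g b := by
    refine Finset.sum_nbij'
      (fun S => (hatTheta G S D, S \ (D ∪ bigN G (hatTheta G S D))))
      (fun b => recon b.1 b.2) himem ?_ ?_ ?_ ?_
    · intro b hbt
      obtain ⟨h1, h2⟩ := (memt b).1 hbt
      refine Finset.mem_filter.2 ⟨Finset.mem_univ _, ?_⟩
      show IsConfig G D (hatTheta G (recon b.1 b.2) D)
      rw [hatTheta_recon hd hb h1 h2]; exact h1
    · intro S _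
      exact S_decomp S
    · intro b hbt
      obtain ⟨h1, h2⟩ := (memt b).1 hbt
      have hft : hatTheta G (recon b.1 b.2) D = b.1 := hatTheta_recon hd hb h1 h2
      have hsd : recon b.1 b.2 \ (D ∪ bigN G b.1) = b.2 := recon_sdiff hd hb h1 h2
      ext : 1
      · exact hft
      · simp only
        rw [hft, hsd]
    · intro S hS
      have := hfg _ (himem S hS)
      rw [S_decomp S] at this
      show f S = g (hatTheta G S D, S \ (D ∪ bigN G (hatTheta G S D)))
      exact this
  have stepC : ∑ b ∈ t, g b
      = ∑ Θ ∈ Finset.univ.filter (IsConfig G D),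
          ∑ T ∈ (D' \ bigN G Θ).powerset, g (Θ, T) := by
    refine Finset.sum_finset_product _ _ _ ?_
    intro p
    rw [memt p, Finset.mem_filter, Finset.mem_powerset]
    simp
  have stepD : ∀ Θ ∈ Finset.univ.filter (IsConfig G D),
      ∑ T ∈ (D' \ bigN G Θ).powerset, g (Θ, T)
        = (1 + lam) ^ D'.card * ∏ p ∈ Θ, polyWeight G lam beta p := by
    intro Θ hΘm
    have hΘ : IsConfig G D Θ := (Finset.mem_filter.1 hΘm).2
    have hC : ∑ T ∈ (D' \ bigN G Θ).powerset, g (Θ, T)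
        = (∏ p ∈ Θ, lam ^ (p.1.card + p.2.card) *
            Real.exp (-beta * (eBetween G p.1 p.2 : ℝ))) *
          ((1 + lam) ^ (D' \ bigN G Θ).card) := by
      rw [← sum_powerset_pow, Finset.mul_sum]
    rw [hC]
    have hsub : bigN G Θ ⊆ D' := bigN_subset hd hb hΘ
    have hle : (bigN G Θ).card ≤ D'.card := Finset.card_le_card hsub
    have hpw : ∏ p ∈ Θ, polyWeight G lam beta p
        = (∏ p ∈ Θ, lam ^ (p.1.card + p.2.card) *
            Real.exp (-beta * (eBetween G p.1 p.2 : ℝ)))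
          / (1 + lam) ^ (∑ p ∈ Θ, (nbr G p.1).card) := by
      rw [← Finset.prod_pow_eq_pow_sum, ← Finset.prod_div_distrib]
      exact Finset.prod_congr rfl fun p _ => rfl
    rw [hpw, ← bigN_card hΘ, Finset.card_sdiff_of_subset hsub,
      pow_sub₀ _ (ne_of_gt hlam1) hle]
    field_simp
  rw [stepA, stepB, stepC, Finset.sum_congr rfl stepD, ← Finset.mul_sum, Xi]

end Main

/-- For the antiferromagnetic Ising model on a `d`-regular bipartite graph `G` with
bipartition `(O, E)`, the partition function of the polymer-model approximation,
`Ẑ = ∑_S (ω̂*(S,O) + ω̂*(S,E))`, satisfies `Ẑ = (1+λ)^{n/2}·(Ξ_O + Ξ_E)`. -/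
theorem stmt10 (G : SimpleGraph V) [DecidableRel G.Adj] (d : ℕ)
    (hreg : G.IsRegularOfDegree d)
    (O E : Finset V) (hdisj : Disjoint O E) (hunion : O ∪ E = Finset.univ)
    (hbip : ∀ u v, G.Adj u v → (u ∈ O ∧ v ∈ E) ∨ (u ∈ E ∧ v ∈ O))
    (hcard : O.card = E.card)
    (lam beta : ℝ) (hlam : 0 < lam) (hbeta : 0 < beta) :
    ∑ S : Finset V, (hatWstar G lam beta S O + hatWstar G lam beta S E) =
      (1 + lam) ^ ((Fintype.card V : ℝ) / 2) *
        (Xi G lam beta O + Xi G lam beta E) := by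
  have hOE : O.card + E.card = Fintype.card V := by
    rw [← Finset.card_union_of_disjoint hdisj, hunion, Finset.card_univ]
  have h1 : ∑ S : Finset V, hatWstar G lam beta S O
      = (1 + lam) ^ E.card * Xi G lam beta O :=
    main_side G hdisj hunion hbip lam beta hlam
  have h2 : ∑ S : Finset V, hatWstar G lam beta S E
      = (1 + lam) ^ O.card * Xi G lam beta E :=
    main_side G hdisj.symm (by rw [Finset.union_comm]; exact hunion)
      (fun u v h => (hbip u v h).symm) lam beta hlam
  have hpow : ((1:ℝ) + lam) ^ ((Fintype.card V : ℝ) / 2)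
      = (1 + lam) ^ (E.card : ℕ) := by
    have hx : ((Fintype.card V : ℝ) / 2) = ((E.card : ℕ) : ℝ) := by
      rw [← hOE, hcard]; push_cast; ring
    rw [hx, Real.rpow_natCast]
  rw [Finset.sum_add_distrib, h1, h2, hcard, hpow]
  ring

end
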